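/- arXiv:1412.4753 — 5 statements merged into one kernel-verified Lean document; each statement's English description precedes it below -/
import Mathlib

section
/- Let U, V be reflexive Banach spaces and B : U → V' a bounded bijective linear operator. With the optimal test norm ‖v‖_{V,opt} := sup_{0 ≠ u ∈ U} ⟨Bu, v⟩/‖u‖_U, one has the duality identity ‖u‖_U = sup_{0 ≠ v ∈ V} ⟨Bu, v⟩ / ‖v‖_{V,opt} for every u ∈ U. -/
/-- The supremum of `f x / ‖x‖` over nonzero `x` equals the operator norm of a
real-valued continuous linear functional `f`. -/
lemma aux_iSup_div_norm {E : Type*} [NormedAddCommGroup E] [NormedSpace ℝ E]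
    (f : E →L[ℝ] ℝ) :
    (⨆ x : {x : E // x ≠ 0}, f x / ‖(x : E)‖) = ‖f‖ := by
  by_cases hE : ∃ x : E, x ≠ 0
  · obtain ⟨x₀, hx₀⟩ := hE
    haveI : Nonempty {x : E // x ≠ 0} := ⟨⟨x₀, hx₀⟩⟩
    have hbdd : BddAbove (Set.range fun x : {x : E // x ≠ 0} => f x / ‖(x : E)‖) := by
      refine ⟨‖f‖, ?_⟩
      rintro _ ⟨⟨x, hx⟩, rfl⟩
      have hxpos : (0 : ℝ) < ‖x‖ := norm_pos_iff.mpr hx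
      rw [div_le_iff₀ hxpos]
      calc f x ≤ |f x| := le_abs_self _
        _ = ‖f x‖ := rfl
        _ ≤ ‖f‖ * ‖x‖ := f.le_opNorm x
    set S : ℝ := ⨆ x : {x : E // x ≠ 0}, f x / ‖(x : E)‖ with hS
    have hle : ∀ x : E, x ≠ 0 → f x ≤ S * ‖x‖ := by
      intro x hx
      have hxpos : (0 : ℝ) < ‖x‖ := norm_pos_iff.mpr hx
      have := le_ciSup hbdd (⟨x, hx⟩ : {x : E // x ≠ 0})
      simpa [div_le_iff₀ hxpos] using this
    have hSnonneg : 0 ≤ S := by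
      have h1 := hle x₀ hx₀
      have h2 := hle (-x₀) (neg_ne_zero.mpr hx₀)
      simp only [map_neg, norm_neg] at h2
      nlinarith [norm_pos_iff.mpr hx₀]
    refine le_antisymm ?_ ?_
    · refine ciSup_le ?_
      rintro ⟨x, hx⟩
      have hxpos : (0 : ℝ) < ‖x‖ := norm_pos_iff.mpr hx
      rw [div_le_iff₀ hxpos]
      calc f x ≤ |f x| := le_abs_self _
        _ = ‖f x‖ := rfl
        _ ≤ ‖f‖ * ‖x‖ := f.le_opNorm x
    · refine f.opNorm_le_bound hSnonneg ?_
      intro x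
      by_cases hx : x = 0
      · simp [hx]
      · have h1 := hle x hx
        have h2 := hle (-x) (neg_ne_zero.mpr hx)
        simp only [map_neg, norm_neg] at h2
        rw [Real.norm_eq_abs, abs_le]
        constructor <;> linarith
  · push_neg at hE
    haveI : IsEmpty {x : E // x ≠ 0} := ⟨fun x => x.2 (hE x)⟩
    have hf : f = 0 := by
      ext x; rw [hE x]; simp
    simp [hf, Real.iSup_of_isEmpty]

/-- Let `U, V` be reflexive Banach spaces and `B : U → V'` a bounded
bijective linear operator.  With the optimal test norm
`‖v‖_{V,opt} := sup_{0 ≠ u ∈ U} ⟨Bu, v⟩/‖u‖_U`, one has the duality identity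
`‖u‖_U = sup_{0 ≠ v ∈ V} ⟨Bu, v⟩ / ‖v‖_{V,opt}` for every `u ∈ U`. -/
theorem statement4
    {U V : Type*}
    [NormedAddCommGroup U] [NormedSpace ℝ U] [CompleteSpace U]
    [NormedAddCommGroup V] [NormedSpace ℝ V] [CompleteSpace V]
    (hUrefl : Function.Surjective (NormedSpace.inclusionInDoubleDual ℝ U))
    (hVrefl : Function.Surjective (NormedSpace.inclusionInDoubleDual ℝ V))
    (B : U →L[ℝ] StrongDual ℝ V)
    (hB : Function.Bijective B)
    (Nopt : V → ℝ)
    (hNopt : ∀ v : V, Nopt v = ⨆ u : {u : U // u ≠ 0}, B u v / ‖(u : U)‖) :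
    ∀ u : U, ‖u‖ = ⨆ v : {v : V // v ≠ 0}, B u v / Nopt v := by
  intro u
  -- the "transpose" operator `T : V → U'`, `(T v)(u) = (B u)(v)`
  set T : V →L[ℝ] StrongDual ℝ U := B.flip with hT
  -- `Nopt v` is the norm of `T v`
  have hNoptT : ∀ v : V, Nopt v = ‖T v‖ := by
    intro v
    rw [hNopt v, ← aux_iSup_div_norm (T v)]
    rfl
  -- `B` as a continuous linear equivalence (open mapping theorem)
  let Be : U ≃L[ℝ] StrongDual ℝ V :=
    ContinuousLinearEquiv.ofBijective B
      (LinearMap.ker_eq_bot.mpr hB.1) (LinearMap.range_eq_top.mpr hB.2)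
  have hBe : ∀ x : U, Be x = B x := fun x => rfl
  -- `T` is injective
  have hTinj : Function.Injective T := by
    intro v w hvw
    have h : ∀ f : StrongDual ℝ V, f (v - w) = 0 := by
      intro f
      obtain ⟨x, hx⟩ := hB.2 f
      have : T v x = T w x := by rw [hvw]
      simp only [hT, ContinuousLinearMap.flip_apply] at this
      rw [← hx]
      simp [map_sub, this]
    have := NormedSpace.eq_zero_of_forall_dual_eq_zero ℝ h
    exact sub_eq_zero.mp this
  -- `T` is surjective
  have hTsurj : Function.Surjective T := by
    intro f
    -- `ψ := f ∘ Be⁻¹ : V'' `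
    set ψ : StrongDual ℝ (StrongDual ℝ V) :=
      f.comp (Be.symm : StrongDual ℝ V →L[ℝ] U) with hψ
    obtain ⟨v, hv⟩ := hVrefl ψ
    refine ⟨v, ?_⟩
    ext x
    have h1 : T v x = B x v := rfl
    have h2 : (NormedSpace.inclusionInDoubleDual ℝ V v) (B x) = ψ (B x) := by rw [hv]
    rw [h1]
    have h3 : B x v = ψ (B x) := by
      simpa [NormedSpace.dual_def] using h2
    rw [h3, hψ]
    simp only [ContinuousLinearMap.comp_apply, ContinuousLinearMap.coe_coe]
    rw [← hBe x]
    simp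
  -- reindex the supremum via the bijection `T` on nonzero elements
  have hmap : Function.Surjective
      (fun v : {v : V // v ≠ 0} =>
        (⟨T v, fun h => v.2 (hTinj (by simpa using h))⟩ :
          {f : StrongDual ℝ U // f ≠ 0})) := by
    rintro ⟨f, hf⟩
    obtain ⟨v, hv⟩ := hTsurj f
    have hvne : v ≠ 0 := by
      rintro rfl
      exact hf (by simpa using hv.symm)
    exact ⟨⟨v, hvne⟩, Subtype.ext hv⟩
  have hreindex :
      (⨆ v : {v : V // v ≠ 0}, B u v / Nopt v)
        = ⨆ f : {f : StrongDual ℝ U // f ≠ 0}, (f : StrongDual ℝ U) u / ‖(f : StrongDual ℝ U)‖ := by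
    rw [← Function.Surjective.iSup_comp hmap
      (fun f : {f : StrongDual ℝ U // f ≠ 0} => (f : StrongDual ℝ U) u / ‖(f : StrongDual ℝ U)‖)]
    refine iSup_congr ?_
    rintro ⟨v, hv⟩
    simp only [hNoptT v]
    rfl
  rw [hreindex]
  -- conclude via the double dual isometry
  have hnorm : ‖u‖ = ‖NormedSpace.inclusionInDoubleDual ℝ U u‖ :=
    ((NormedSpace.inclusionInDoubleDualLi ℝ).norm_map u).symm
  rw [hnorm, ← aux_iSup_div_norm (NormedSpace.inclusionInDoubleDual ℝ U u)]
  refine iSup_congr ?_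
  rintro ⟨f, hf⟩
  simp [NormedSpace.dual_def]
end

section
/- Let U, V be reflexive Banach spaces and B : U → V' a bounded bijective linear operator. With the optimal trial norm ‖u‖_{U,opt} := sup_{0 ≠ v ∈ V} ⟨Bu, v⟩/‖v‖_V, one has ‖v‖_V = sup_{0 ≠ u ∈ U} ⟨Bu, v⟩ / ‖u‖_{U,opt} for every v ∈ V. -/
lemma aux_norm {V : Type*} [NormedAddCommGroup V] [NormedSpace ℝ V] [Nontrivial V]
    (f : StrongDual ℝ V) :
    (⨆ v : {v : V // v ≠ 0}, f v / ‖(v : V)‖) = ‖f‖ := by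
  obtain ⟨v₀, hv₀⟩ := exists_ne (0 : V)
  have hne : Nonempty {v : V // v ≠ 0} := ⟨⟨v₀, hv₀⟩⟩
  have hle : ∀ v : {v : V // v ≠ 0}, f v / ‖(v : V)‖ ≤ ‖f‖ := by
    intro v
    have hv : (0:ℝ) < ‖(v : V)‖ := norm_pos_iff.mpr v.2
    rw [div_le_iff₀ hv]
    exact le_trans (le_abs_self _) (f.le_opNorm v)
  have hbdd : BddAbove (Set.range fun v : {v : V // v ≠ 0} => f v / ‖(v : V)‖) := by
    refine ⟨‖f‖, ?_⟩
    rintro x ⟨v, rfl⟩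
    exact hle v
  set S := ⨆ v : {v : V // v ≠ 0}, f v / ‖(v : V)‖ with hS
  have hnn : 0 ≤ S := by
    rcases le_total 0 (f v₀) with h | h
    · refine le_trans ?_ (le_ciSup hbdd ⟨v₀, hv₀⟩)
      positivity
    · refine le_trans ?_ (le_ciSup hbdd ⟨-v₀, neg_ne_zero.mpr hv₀⟩)
      simp only [map_neg, norm_neg]
      have : (0:ℝ) < ‖v₀‖ := norm_pos_iff.mpr hv₀
      apply div_nonneg (by linarith) this.le
  refine le_antisymm (ciSup_le hle) ?_
  refine f.opNorm_le_bound hnn ?_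
  intro v
  rcases eq_or_ne v 0 with rfl | hv
  · simp
  · have hvp : (0:ℝ) < ‖v‖ := norm_pos_iff.mpr hv
    rw [Real.norm_eq_abs]
    rcases le_total 0 (f v) with h | h
    · rw [abs_of_nonneg h]
      exact (div_le_iff₀ hvp).mp (le_ciSup hbdd ⟨v, hv⟩)
    · rw [abs_of_nonpos h]
      have h2 := le_ciSup hbdd ⟨-v, neg_ne_zero.mpr hv⟩
      simp only [map_neg, norm_neg] at h2
      have := (div_le_iff₀ hvp).mp h2
      linarith

/-- Let `U, V` be reflexive Banach spaces and `B : U → V'` a bounded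
bijective linear operator.  With the optimal trial norm
`‖u‖_{U,opt} := sup_{0 ≠ v ∈ V} ⟨Bu, v⟩/‖v‖_V`, one has
`‖v‖_V = sup_{0 ≠ u ∈ U} ⟨Bu, v⟩ / ‖u‖_{U,opt}` for every `v ∈ V`. -/
theorem statement5
    {U V : Type*}
    [NormedAddCommGroup U] [NormedSpace ℝ U] [CompleteSpace U]
    [NormedAddCommGroup V] [NormedSpace ℝ V] [CompleteSpace V]
    (hUrefl : Function.Surjective (NormedSpace.inclusionInDoubleDual ℝ U))
    (hVrefl : Function.Surjective (NormedSpace.inclusionInDoubleDual ℝ V))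
    (B : U →L[ℝ] StrongDual ℝ V)
    (hB : Function.Bijective B)
    (Nopt : U → ℝ)
    (hNopt : ∀ u : U, Nopt u = ⨆ v : {v : V // v ≠ 0}, B u v / ‖(v : V)‖) :
    ∀ v : V, ‖v‖ = ⨆ u : {u : U // u ≠ 0}, B u v / Nopt u := by
  intro v
  rcases subsingleton_or_nontrivial V with hVs | hVn
  · -- trivial V
    have hv : v = 0 := Subsingleton.elim v 0
    subst hv
    rw [norm_zero]
    rcases isEmpty_or_nonempty {u : U // u ≠ 0} with he | hne
    · rw [Real.iSup_of_isEmpty]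
    · have : ∀ u : {u : U // u ≠ 0}, B (u : U) (0 : V) / Nopt u = 0 := by
        intro u; simp
      rw [iSup_congr this, ciSup_const]
  · have hNopt' : ∀ u : U, Nopt u = ‖B u‖ := fun u => by
      rw [hNopt]; exact aux_norm (B u)
    simp only [hNopt']
    rcases eq_or_ne v 0 with rfl | hv
    · rw [norm_zero]
      rcases isEmpty_or_nonempty {u : U // u ≠ 0} with he | hne
      · rw [Real.iSup_of_isEmpty]
      · have : ∀ u : {u : U // u ≠ 0}, B (u : U) (0 : V) / ‖B (u : U)‖ = 0 := by
          intro u; simp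
        rw [iSup_congr this, ciSup_const]
    · obtain ⟨f, hf1, hfv⟩ := exists_dual_vector ℝ v (norm_ne_zero_iff.mpr hv)
      obtain ⟨u₀, hu₀f⟩ := hB.2 f
      have hu₀ : u₀ ≠ 0 := by
        intro h
        rw [h, map_zero] at hu₀f
        rw [← hu₀f, norm_zero] at hf1
        norm_num at hf1
      have hle : ∀ u : {u : U // u ≠ 0}, B (u : U) v / ‖B (u : U)‖ ≤ ‖v‖ := by
        intro u
        have hBu : B (u : U) ≠ 0 := fun h => u.2 (hB.1 (h.trans (map_zero B).symm))
        have hpos : (0:ℝ) < ‖B (u : U)‖ := norm_pos_iff.mpr hBu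
        rw [div_le_iff₀ hpos]
        calc B (u : U) v ≤ ‖B (u : U) v‖ := le_abs_self _
          _ ≤ ‖B (u : U)‖ * ‖v‖ := (B (u : U)).le_opNorm v
          _ = ‖v‖ * ‖B (u : U)‖ := mul_comm _ _
      have hbdd : BddAbove (Set.range fun u : {u : U // u ≠ 0} => B (u : U) v / ‖B (u : U)‖) := by
        refine ⟨‖v‖, ?_⟩
        rintro x ⟨u, rfl⟩
        exact hle u
      have hne : Nonempty {u : U // u ≠ 0} := ⟨⟨u₀, hu₀⟩⟩
      refine le_antisymm ?_ (ciSup_le hle)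
      have h0 := le_ciSup hbdd ⟨u₀, hu₀⟩
      simp only [hu₀f, hf1] at h0
      rw [hfv] at h0
      simpa using h0
end

section
/- Let U be a reflexive Banach space, V a Hilbert space with inner product ⟨·,·⟩_V, and b : U × V → ℝ a bounded bilinear form with induced bijective operator B : U → V'. Define the trial-to-test operator Θ : U → V by ⟨Θu, v⟩_V = b(u,v) for all v ∈ V. Then for any closed subspace U_h ⊆ U and ℓ ∈ V', the Petrov–Galerkin problem: find u_h ∈ U_h with b(u_h, v_h) = ℓ(v_h) for all v_h ∈ Θ(U_h), has a unique solution, and it satisfies the best approximation property ‖u − u_h‖_{U,opt} = inf_{u'_h ∈ U_h} ‖u − u'_h‖_{U,opt}, where u ∈ U is the unique solution of b(u,v) = ℓ(v) for all v ∈ V and ‖w‖_{U,opt} := sup_{0 ≠ v ∈ V} b(w,v)/‖v‖_V. -/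
open scoped RealInnerProductSpace

/-- DPG method: unique solvability of the Petrov–Galerkin problem
with optimal test functions on a closed subspace `U_h ⊆ U`, and the best
approximation property in the optimal trial norm
`‖w‖_{U,opt} := sup_{0 ≠ v ∈ V} b(w,v)/‖v‖_V`. -/
theorem statement7
    {U V : Type*}
    [NormedAddCommGroup U] [NormedSpace ℝ U] [CompleteSpace U]
    [NormedAddCommGroup V] [InnerProductSpace ℝ V] [CompleteSpace V]
    (hUrefl : Function.Surjective (NormedSpace.inclusionInDoubleDual ℝ U))
    (b : U →L[ℝ] V →L[ℝ] ℝ)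
    (hb : Function.Bijective fun u : U => b u)
    -- the trial-to-test operator, defined by the Riesz representation
    (Θ : U → V) (hΘ : ∀ (u : U) (v : V), ⟪Θ u, v⟫ = b u v)
    -- a closed subspace of `U`
    (Uh : Submodule ℝ U) (hUh : IsClosed (Uh : Set U))
    (ℓ : V →L[ℝ] ℝ)
    -- `u` is the unique exact solution
    (u : U) (hu : ∀ v : V, b u v = ℓ v) :
    -- unique solvability of the discrete Petrov–Galerkin problem
    (∃! uh : U, uh ∈ Uh ∧ ∀ wh ∈ Uh, b uh (Θ wh) = ℓ (Θ wh)) ∧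
    -- best approximation property in the optimal trial norm
    (∀ uh : U, uh ∈ Uh → (∀ wh ∈ Uh, b uh (Θ wh) = ℓ (Θ wh)) →
      (⨆ v : {v : V // v ≠ 0}, b (u - uh) v / ‖(v : V)‖)
        = ⨅ wh : Uh, ⨆ v : {v : V // v ≠ 0}, b (u - (wh : U)) v / ‖(v : V)‖) := by
  classical
  -- Θ is Riesz inverse composed with b
  have hΘT : ∀ x : U, Θ x = (InnerProductSpace.toDual ℝ V).symm (b x) := by
    intro x
    apply (InnerProductSpace.toDual ℝ V).injective
    ext v
    simp [InnerProductSpace.toDual_apply_apply, hΘ]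
  have hΘbij : Function.Bijective Θ := by
    have h1 : Θ = (fun f => (InnerProductSpace.toDual ℝ V).symm f) ∘ (fun x : U => b x) :=
      funext hΘT
    rw [h1]
    exact (InnerProductSpace.toDual ℝ V).symm.bijective.comp hb
  -- linearity of Θ
  have hΘsub : ∀ x y : U, Θ (x - y) = Θ x - Θ y := by
    intro x y
    apply ext_inner_right ℝ
    intro v
    simp [hΘ, inner_sub_left]
  -- Θ as linear map
  have hΘadd : ∀ x y : U, Θ (x + y) = Θ x + Θ y := by
    intro x y
    apply ext_inner_right ℝ
    intro v
    simp [hΘ, inner_add_left]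
  have hΘsmul : ∀ (c : ℝ) (x : U), Θ (c • x) = c • Θ x := by
    intro c x
    apply ext_inner_right ℝ
    intro v
    simp [hΘ, real_inner_smul_left]
  let Θlin : U →ₗ[ℝ] V :=
    { toFun := Θ, map_add' := hΘadd, map_smul' := hΘsmul }
  -- continuous inverse via open mapping theorem
  let E1 := ContinuousLinearEquiv.ofBijective b
    (LinearMap.ker_eq_bot |>.mpr hb.injective)
    (LinearMap.range_eq_top.mpr hb.surjective)
  let g : V → U := fun v => E1.symm ((InnerProductSpace.toDual ℝ V) v)
  have hgΘ : ∀ x : U, g (Θ x) = x := by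
    intro x
    have : (InnerProductSpace.toDual ℝ V) (Θ x) = b x := by
      rw [hΘT]; simp
    simp only [g, this]
    have : b x = E1 x := rfl
    rw [this, ContinuousLinearEquiv.symm_apply_apply]
  have hgcont : Continuous g :=
    E1.symm.continuous.comp (InnerProductSpace.toDual ℝ V).continuous
  -- the image subspace
  let M : Submodule ℝ V := Uh.map Θlin
  have hMmem : ∀ v : V, v ∈ M ↔ ∃ x ∈ Uh, Θ x = v := by
    intro v
    constructor
    · rintro ⟨x, hx, rfl⟩; exact ⟨x, hx, rfl⟩
    · rintro ⟨x, hx, rfl⟩; exact ⟨x, hx, rfl⟩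
  have hMset : (M : Set V) = g ⁻¹' (Uh : Set U) := by
    ext v
    simp only [Set.mem_preimage, SetLike.mem_coe, hMmem]
    constructor
    · rintro ⟨x, hx, rfl⟩; rwa [hgΘ]
    · intro h
      refine ⟨g v, h, ?_⟩
      obtain ⟨x, rfl⟩ := hΘbij.surjective v
      rw [hgΘ]
  have hMclosed : IsClosed (M : Set V) := by
    rw [hMset]; exact hUh.preimage hgcont
  haveI : CompleteSpace M := hMclosed.completeSpace_coe
  -- orthogonal projection of Θ u
  let P : V := (M.orthogonalProjectionOnto (Θ u) : V)
  have hPmem : P ∈ M := (M.orthogonalProjectionOnto (Θ u)).2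
  obtain ⟨u₀, hu₀Uh, hu₀⟩ := (hMmem P).mp hPmem
  -- the discrete condition is equivalent to orthogonality
  have hcond : ∀ uh : U, ((∀ wh ∈ Uh, b uh (Θ wh) = ℓ (Θ wh)) ↔
      ∀ m ∈ M, ⟪Θ u - Θ uh, m⟫ = 0) := by
    intro uh
    constructor
    · intro h m hm
      obtain ⟨wh, hwh, rfl⟩ := (hMmem m).mp hm
      rw [inner_sub_left, hΘ, hΘ, h wh hwh, hu]
      ring
    · intro h wh hwh
      have := h (Θ wh) ((hMmem _).mpr ⟨wh, hwh, rfl⟩)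
      rw [inner_sub_left, hΘ, hΘ, sub_eq_zero] at this
      rw [← this, hu]
  have hu₀sol : ∀ wh ∈ Uh, b u₀ (Θ wh) = ℓ (Θ wh) := by
    rw [hcond]
    intro m hm
    rw [hu₀]
    exact M.starProjection_inner_eq_zero (Θ u) m hm
  have huniq : ∀ uh : U, uh ∈ Uh → (∀ wh ∈ Uh, b uh (Θ wh) = ℓ (Θ wh)) → Θ uh = P := by
    intro uh hmem hsol
    exact (M.eq_starProjection_of_mem_of_inner_eq_zero
      ((hMmem _).mpr ⟨uh, hmem, rfl⟩) ((hcond uh).mp hsol)).symm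
  -- the sup is the norm of Θ w
  have supLem : ∀ w : U, (⨆ v : {v : V // v ≠ 0}, b w v / ‖(v : V)‖) = ‖Θ w‖ := by
    intro w
    by_cases hw : Θ w = 0
    · have hz : ∀ v : V, b w v = 0 := by
        intro v; rw [← hΘ, hw, inner_zero_left]
      rw [hw, norm_zero]
      have : (fun v : {v : V // v ≠ 0} => b w v / ‖(v : V)‖) = fun _ => (0 : ℝ) := by
        funext v; rw [hz, zero_div]
      rw [this]
      exact Real.iSup_const_zero
    · have hbd : ∀ v : {v : V // v ≠ 0}, b w v / ‖(v : V)‖ ≤ ‖Θ w‖ := by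
        rintro ⟨v, hv⟩
        have hvn : (0 : ℝ) < ‖v‖ := norm_pos_iff.mpr hv
        rw [div_le_iff₀ hvn, ← hΘ]
        exact real_inner_le_norm _ _
      haveI : Nonempty {v : V // v ≠ 0} := ⟨⟨Θ w, hw⟩⟩
      have hbdd : BddAbove (Set.range fun v : {v : V // v ≠ 0} => b w v / ‖(v : V)‖) := by
        refine ⟨‖Θ w‖, ?_⟩
        rintro x ⟨v, rfl⟩
        exact hbd v
      apply le_antisymm
      · exact ciSup_le fun v => hbd v
      · have hwn : (0 : ℝ) < ‖Θ w‖ := norm_pos_iff.mpr hw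
        have key : b w (Θ w) / ‖Θ w‖ = ‖Θ w‖ := by
          rw [← hΘ, real_inner_self_eq_norm_mul_norm]
          field_simp
        calc ‖Θ w‖ = b w (Θ w) / ‖Θ w‖ := key.symm
          _ ≤ ⨆ v : {v : V // v ≠ 0}, b w v / ‖(v : V)‖ :=
            le_ciSup_of_le hbdd ⟨Θ w, hw⟩ le_rfl
  refine ⟨⟨u₀, ⟨hu₀Uh, hu₀sol⟩, ?_⟩, ?_⟩
  · rintro uh ⟨hmem, hsol⟩
    exact hΘbij.injective (by rw [huniq uh hmem hsol, hu₀])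
  · intro uh hmem hsol
    have hP : Θ uh = P := huniq uh hmem hsol
    -- rewrite each sup as a norm
    have hL : (⨆ v : {v : V // v ≠ 0}, b (u - uh) v / ‖(v : V)‖) = ‖Θ u - Θ uh‖ := by
      rw [supLem, hΘsub]
    have hR : ∀ wh : Uh, (⨆ v : {v : V // v ≠ 0}, b (u - (wh : U)) v / ‖(v : V)‖)
        = ‖Θ u - Θ (wh : U)‖ := by
      intro wh; rw [supLem, hΘsub]
    rw [hL]
    have hRfun : (fun wh : Uh => ⨆ v : {v : V // v ≠ 0}, b (u - (wh : U)) v / ‖(v : V)‖)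
        = fun wh : Uh => ‖Θ u - Θ (wh : U)‖ := funext hR
    rw [hRfun]
    -- ‖Θu - Θuh‖ = ⨅ over M
    have hmin : ‖Θ u - Θ uh‖ = ⨅ w : (M : Set V), ‖Θ u - w‖ := by
      rw [Submodule.norm_eq_iInf_iff_real_inner_eq_zero M ((hMmem _).mpr ⟨uh, hmem, rfl⟩)]
      exact (hcond uh).mp hsol
    rw [hmin]
    -- reindex the infimum
    have hbb1 : BddBelow (Set.range fun w : (M : Set V) => ‖Θ u - (w : V)‖) := by
      refine ⟨0, ?_⟩; rintro x ⟨v, rfl⟩; exact norm_nonneg _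
    have hbb2 : BddBelow (Set.range fun wh : Uh => ‖Θ u - Θ (wh : U)‖) := by
      refine ⟨0, ?_⟩; rintro x ⟨v, rfl⟩; exact norm_nonneg _
    apply le_antisymm
    · apply le_ciInf
      intro wh
      exact ciInf_le_of_le hbb1 ⟨Θ (wh : U), (hMmem _).mpr ⟨(wh : U), wh.2, rfl⟩⟩ le_rfl
    · apply le_ciInf
      rintro ⟨m, hm⟩
      obtain ⟨x, hx, rfl⟩ := (hMmem m).mp hm
      exact ciInf_le_of_le hbb2 ⟨x, hx⟩ le_rfl
end

section
/- Let U, V be reflexive Banach spaces and b : U × V → ℝ a bounded bilinear form such that the operator B : U → V', u ↦ b(u,·), is bounded and bijective. Suppose ‖·‖_w is a seminorm on U and C > 0 satisfies ‖u‖_w ≤ C · sup_{0 ≠ v ∈ V} b(u,v)/‖v‖_V for all u ∈ U. Then for any subspace U_h ⊆ U on which the Petrov–Galerkin solution u_h with optimal test functions exists, the quasi-optimality estimate ‖u − u_h‖_w ≤ C · inf_{u'_h ∈ U_h} sup_{0 ≠ v ∈ V} b(u − u'_h, v)/‖v‖_V holds. -/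
open scoped RealInnerProductSpace

/-- Quasi-optimality of the DPG (Petrov–Galerkin with optimal test
functions) solution in any seminorm `‖·‖_w` dominated by the optimal trial norm:
if `‖u‖_w ≤ C · sup_{0≠v} b(u,v)/‖v‖_V` for all `u`, then
`‖u − u_h‖_w ≤ C · inf_{u'_h ∈ U_h} sup_{0≠v} b(u − u'_h, v)/‖v‖_V`. -/
theorem statement10
    {U V : Type*}
    [NormedAddCommGroup U] [NormedSpace ℝ U] [CompleteSpace U]
    [NormedAddCommGroup V] [InnerProductSpace ℝ V] [CompleteSpace V]
    (hUrefl : Function.Surjective (NormedSpace.inclusionInDoubleDual ℝ U))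
    (b : U →L[ℝ] V →L[ℝ] ℝ)
    (hb : Function.Bijective fun u : U => b u)
    (w : Seminorm ℝ U) (C : ℝ) (hC : 0 < C)
    (hw : ∀ u : U, w u ≤ C * ⨆ v : {v : V // v ≠ 0}, b u v / ‖(v : V)‖)
    -- trial-to-test operator
    (Θ : U → V) (hΘ : ∀ (u : U) (v : V), ⟪Θ u, v⟫ = b u v)
    (Uh : Submodule ℝ U)
    (ℓ : V →L[ℝ] ℝ)
    -- exact solution
    (u : U) (hu : ∀ v : V, b u v = ℓ v)
    -- the Petrov–Galerkin solution with optimal test functions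
    (uh : U) (huh : uh ∈ Uh) (huhsol : ∀ wh ∈ Uh, b uh (Θ wh) = ℓ (Θ wh)) :
    w (u - uh) ≤
      C * ⨅ wh : Uh, ⨆ v : {v : V // v ≠ 0}, b (u - (wh : U)) v / ‖(v : V)‖ := by
  have hsup : ∀ x : U, (⨆ v : {v : V // v ≠ 0}, b x v / ‖(v : V)‖) = ‖Θ x‖ := by
    intro x
    have hb' : ∀ v : V, b x v = ⟪Θ x, v⟫ := fun v => (hΘ x v).symm
    apply le_antisymm
    · apply Real.iSup_le _ (norm_nonneg _)
      rintro ⟨v, hv⟩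
      rw [hb', div_le_iff₀ (norm_pos_iff.mpr hv)]
      exact real_inner_le_norm _ _
    · by_cases hx : Θ x = 0
      · rw [hx, norm_zero]
        exact Real.iSup_nonneg fun v => by
          rw [hb', hx, inner_zero_left, zero_div]
      · have hbdd : BddAbove (Set.range fun v : {v : V // v ≠ 0} => b x v / ‖(v : V)‖) := by
          refine ⟨‖Θ x‖, ?_⟩
          rintro r ⟨⟨v, hv⟩, rfl⟩
          show b x v / ‖v‖ ≤ ‖Θ x‖
          rw [hb', div_le_iff₀ (norm_pos_iff.mpr hv)]
          exact real_inner_le_norm _ _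
        have := le_ciSup hbdd (⟨Θ x, hx⟩ : {v : V // v ≠ 0})
        refine le_trans (le_of_eq ?_) this
        simp only [hb', real_inner_self_eq_norm_mul_norm]
        rw [mul_div_assoc, div_self (norm_ne_zero_iff.mpr hx), mul_one]
  have gal : ∀ vh ∈ Uh, b (u - uh) (Θ vh) = 0 := by
    intro vh hvh
    simp [map_sub, hu (Θ vh), huhsol vh hvh]
  have key : ∀ wh : Uh, ‖Θ (u - uh)‖ ≤ ‖Θ (u - (wh : U))‖ := by
    intro wh
    have h1 : ⟪Θ (u - (wh : U)), Θ (u - uh)⟫ = ‖Θ (u - uh)‖ ^ 2 := by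
      rw [hΘ]
      have h3 : b (u - (wh : U)) (Θ (u - uh))
          = b (u - uh) (Θ (u - uh)) + b (uh - (wh : U)) (Θ (u - uh)) := by
        simp only [map_sub, ContinuousLinearMap.sub_apply]; ring
      have h4 : b (uh - (wh : U)) (Θ (u - uh)) = 0 := by
        rw [← hΘ, real_inner_comm, hΘ]
        exact gal _ (Uh.sub_mem huh wh.2)
      rw [h3, h4, add_zero, ← hΘ, real_inner_self_eq_norm_sq]
    have h5 : ‖Θ (u - uh)‖ ^ 2 ≤ ‖Θ (u - (wh : U))‖ * ‖Θ (u - uh)‖ :=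
      h1 ▸ real_inner_le_norm _ _
    nlinarith [norm_nonneg (Θ (u - uh)), norm_nonneg (Θ (u - (wh : U)))]
  calc w (u - uh) ≤ C * ⨆ v : {v : V // v ≠ 0}, b (u - uh) v / ‖(v : V)‖ := hw _
    _ = C * ‖Θ (u - uh)‖ := by rw [hsup]
    _ ≤ C * ⨅ wh : Uh, ⨆ v : {v : V // v ≠ 0}, b (u - (wh : U)) v / ‖(v : V)‖ := by
        refine mul_le_mul_of_nonneg_left ?_ hC.le
        refine le_ciInf fun wh => ?_
        rw [hsup]
        exact key wh
end

section
/- Let X be a reflexive Banach space and Y a normed space, and let b : X × Y → ℝ be bilinear with |b(x,y)| ≤ M‖x‖‖y‖. Define ‖x‖_opt := sup_{0≠y} b(x,y)/‖y‖. If there is β > 0 with ‖x‖_opt ≥ β‖x‖ for all x ∈ X, then any two minimizers over a closed convex subset K ⊆ X of the functional x ↦ ‖x₀ − x‖_opt (for fixed x₀) have distance at most (2/β)·inf_{x∈K}‖x₀ − x‖_opt ≤ (2M/β)·inf_{x∈K}‖x₀ − x‖; and if ‖·‖_opt comes from a bilinear form on a Hilbert test space via the trial-to-test operator, ‖x‖_opt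 = ‖Θx‖_V, then the minimizer over a closed subspace K is unique. -/
open scoped RealInnerProductSpace

/-- Let `X` be a reflexive Banach space, `Y` a normed space and
`b : X × Y → ℝ` bilinear with `|b(x,y)| ≤ M‖x‖‖y‖`.  With
`‖x‖_opt := sup_{0≠y} b(x,y)/‖y‖` and inf-sup constant `β > 0`
(`‖x‖_opt ≥ β‖x‖`), any two minimizers over a closed convex `K ⊆ X` of
`x ↦ ‖x₀ − x‖_opt` have distance at most `(2/β)·inf_{x∈K}‖x₀ − x‖_opt`, which is
`≤ (2M/β)·inf_{x∈K}‖x₀ − x‖`.  Moreover, if `‖·‖_opt` comes from a bounded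
bilinear form on a Hilbert test space `V` via the trial-to-test operator
(`‖x‖_opt = ‖Θx‖_V`, `⟪Θx, v⟫_V = b(x,v)`), then the minimizer over a closed
subspace is unique. -/
theorem statement19
    {X Y V : Type*}
    [NormedAddCommGroup X] [NormedSpace ℝ X] [CompleteSpace X]
    [NormedAddCommGroup Y] [NormedSpace ℝ Y]
    [NormedAddCommGroup V] [InnerProductSpace ℝ V] [CompleteSpace V]
    (hXrefl : Function.Surjective (NormedSpace.inclusionInDoubleDual ℝ X))
    (b : X →L[ℝ] Y →L[ℝ] ℝ)
    (M : ℝ) (hM : ∀ (x : X) (y : Y), |b x y| ≤ M * ‖x‖ * ‖y‖)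
    (Nopt : X → ℝ)
    (hNopt : ∀ x : X, Nopt x = ⨆ y : {y : Y // y ≠ 0}, b x y / ‖(y : Y)‖)
    (β : ℝ) (hβ : 0 < β)
    (hinfsup : ∀ x : X, β * ‖x‖ ≤ Nopt x) :
    -- distance between two minimizers over a closed convex set
    (∀ (K : Set X), Convex ℝ K → IsClosed K → ∀ x₀ x₁ x₂ : X,
      x₁ ∈ K → x₂ ∈ K →
      (∀ x ∈ K, Nopt (x₀ - x₁) ≤ Nopt (x₀ - x)) →
      (∀ x ∈ K, Nopt (x₀ - x₂) ≤ Nopt (x₀ - x)) →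
      ‖x₁ - x₂‖ ≤ (2 / β) * ⨅ x : K, Nopt (x₀ - (x : X)) ∧
      (2 / β) * ⨅ x : K, Nopt (x₀ - (x : X)) ≤ (2 * M / β) * ⨅ x : K, ‖x₀ - (x : X)‖) ∧
    -- uniqueness of the minimizer over a closed subspace in the Hilbertian case
    (∀ (b' : X →L[ℝ] V →L[ℝ] ℝ) (Θ : X → V),
      (∀ (x : X) (v : V), ⟪Θ x, v⟫ = b' x v) →
      (∀ x : X, Nopt x = ‖Θ x‖) →
      ∀ (K : Submodule ℝ X), IsClosed (K : Set X) → ∀ x₀ x₁ x₂ : X,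
        x₁ ∈ K → x₂ ∈ K →
        (∀ x ∈ K, Nopt (x₀ - x₁) ≤ Nopt (x₀ - x)) →
        (∀ x ∈ K, Nopt (x₀ - x₂) ≤ Nopt (x₀ - x)) →
        x₁ = x₂) := by
  -- nonnegativity of Nopt
  have hN0 : ∀ x : X, 0 ≤ Nopt x := fun x =>
    le_trans (by positivity) (hinfsup x)
  -- pointwise bound
  have hle : ∀ (x : X) (y : {y : Y // y ≠ 0}), b x y / ‖(y : Y)‖ ≤ M * ‖x‖ := by
    intro x y
    have hy : 0 < ‖(y : Y)‖ := norm_pos_iff.mpr y.2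
    have h1 : b x y ≤ M * ‖x‖ * ‖(y : Y)‖ := (abs_le.mp (hM x y)).2
    rw [div_le_iff₀ hy]
    exact h1
  have hbdd : ∀ x : X,
      BddAbove (Set.range fun y : {y : Y // y ≠ 0} => b x y / ‖(y : Y)‖) :=
    fun x => ⟨M * ‖x‖, by rintro _ ⟨y, rfl⟩; exact hle x y⟩
  -- Nopt x ≤ M * ‖x‖
  have hNM : ∀ x : X, Nopt x ≤ M * ‖x‖ := by
    intro x
    by_cases hx : x = 0
    · subst hx
      have h1 : Nopt 0 ≤ 0 := by
        rw [hNopt]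
        exact Real.iSup_le (fun y => by simp) le_rfl
      simpa using h1
    · by_cases hY : Nonempty {y : Y // y ≠ 0}
      · obtain ⟨y⟩ := hY
        have hMx : 0 ≤ M * ‖x‖ := by
          have h1 : 0 ≤ M * ‖x‖ * ‖(y : Y)‖ := (abs_nonneg _).trans (hM x y)
          have hy : 0 < ‖(y : Y)‖ := norm_pos_iff.mpr y.2
          nlinarith
        rw [hNopt]
        exact Real.iSup_le (hle x) hMx
      · exfalso
        have h0 : Nopt x ≤ 0 := by
          rw [hNopt]
          exact Real.iSup_le (fun y => (not_nonempty_iff.mp hY).elim y) le_rfl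
        have := hinfsup x
        have hxn : 0 < ‖x‖ := norm_pos_iff.mpr hx
        nlinarith
  -- subadditivity
  have hsub : ∀ a c : X, Nopt (a + c) ≤ Nopt a + Nopt c := by
    intro a c
    rw [hNopt (a + c)]
    refine Real.iSup_le (fun y => ?_) (add_nonneg (hN0 a) (hN0 c))
    have heq : b (a + c) y / ‖(y : Y)‖ = b a y / ‖(y : Y)‖ + b c y / ‖(y : Y)‖ := by
      rw [map_add, ContinuousLinearMap.add_apply, add_div]
    rw [heq]
    exact add_le_add ((hNopt a).symm ▸ le_ciSup (hbdd a) y)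
      ((hNopt c).symm ▸ le_ciSup (hbdd c) y)
  -- Nopt is symmetric under negation
  have hneg : ∀ a : X, Nopt (-a) ≤ Nopt a := by
    intro a
    rw [hNopt (-a)]
    refine Real.iSup_le (fun y => ?_) (hN0 a)
    have heq : b (-a) y / ‖(y : Y)‖
        = b a (-(y : Y)) / ‖(-(y : Y))‖ := by
      rw [map_neg, ContinuousLinearMap.neg_apply, map_neg, norm_neg, neg_div]
    rw [heq]
    exact (hNopt a).symm ▸ le_ciSup (hbdd a) ⟨-(y : Y), neg_ne_zero.mpr y.2⟩
  constructor
  · intro K hKconv hKcl x₀ x₁ x₂ hx₁ hx₂ hmin₁ hmin₂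
    haveI : Nonempty K := ⟨⟨x₁, hx₁⟩⟩
    set I : ℝ := ⨅ x : K, Nopt (x₀ - (x : X)) with hI
    have hbddI : BddBelow (Set.range fun x : K => Nopt (x₀ - (x : X))) :=
      ⟨0, by rintro _ ⟨x, rfl⟩; exact hN0 _⟩
    have hIle₁ : I ≤ Nopt (x₀ - x₁) := ciInf_le hbddI ⟨x₁, hx₁⟩
    have hIge₁ : Nopt (x₀ - x₁) ≤ I := le_ciInf fun x => hmin₁ x x.2
    have hIle₂ : I ≤ Nopt (x₀ - x₂) := ciInf_le hbddI ⟨x₂, hx₂⟩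
    have hIge₂ : Nopt (x₀ - x₂) ≤ I := le_ciInf fun x => hmin₂ x x.2
    constructor
    · -- ‖x₁ - x₂‖ ≤ (2/β) * I
      have key : β * ‖x₁ - x₂‖ ≤ 2 * I := by
        have h1 : β * ‖x₁ - x₂‖ ≤ Nopt (x₁ - x₂) := hinfsup _
        have h2 : x₁ - x₂ = (x₀ - x₂) + -(x₀ - x₁) := by abel
        have h3 : Nopt (x₁ - x₂) ≤ Nopt (x₀ - x₂) + Nopt (x₀ - x₁) := by
          rw [h2]
          exact (hsub _ _).trans (add_le_add_right (hneg _) _)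
        linarith
      rw [div_mul_eq_mul_div, le_div_iff₀ hβ]
      nlinarith
    · -- (2/β) * I ≤ (2M/β) * J
      set J : ℝ := ⨅ x : K, ‖x₀ - (x : X)‖ with hJ
      have hJ0 : (0 : ℝ) ≤ J := le_ciInf fun x => norm_nonneg _
      rcases subsingleton_or_nontrivial X with hXs | hXn
      · have hzero : ∀ x : K, Nopt (x₀ - (x : X)) = 0 := fun x => by
          rw [Subsingleton.elim (x₀ - (x : X)) 0]
          exact le_antisymm (by simpa using hNM 0) (hN0 0)
        have hI0 : I = 0 := by
          rw [hI]
          simp only [hzero]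
          exact ciInf_const
        have hJz : ∀ x : K, ‖x₀ - (x : X)‖ = 0 := fun x => by
          rw [Subsingleton.elim (x₀ - (x : X)) 0, norm_zero]
        have hJ0' : J = 0 := by
          rw [hJ]
          simp only [hJz]
          exact ciInf_const
        simp [hI0, hJ0']
      · -- nontrivial X : M ≥ 0
        obtain ⟨x, hx⟩ := exists_ne (0 : X)
        have hMnn : 0 ≤ M := by
          have hMx : Nopt x ≤ M * ‖x‖ := hNM x
          have hNx : 0 < Nopt x :=
            lt_of_lt_of_le (mul_pos hβ (norm_pos_iff.mpr hx)) (hinfsup x)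
          have hxn : 0 < ‖x‖ := norm_pos_iff.mpr hx
          nlinarith
        have hIJ : I ≤ M * J := by
          rcases hMnn.eq_or_lt with hM0 | hM0
          · have h0 : I ≤ 0 := hIle₁.trans ((hNM _).trans (by rw [← hM0]; ring_nf; simp))
            rw [← hM0]
            simpa using h0
          · have hdiv : I / M ≤ J := le_ciInf fun x => by
              rw [div_le_iff₀ hM0]
              calc I ≤ Nopt (x₀ - (x : X)) := ciInf_le hbddI x
                _ ≤ M * ‖x₀ - (x : X)‖ := hNM _
                _ = ‖x₀ - (x : X)‖ * M := mul_comm _ _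
            calc I = (I / M) * M := by field_simp
              _ ≤ J * M := mul_le_mul_of_nonneg_right hdiv hMnn
              _ = M * J := mul_comm _ _
        have h2β : (0 : ℝ) ≤ 2 / β := by positivity
        calc (2 / β) * I ≤ (2 / β) * (M * J) := mul_le_mul_of_nonneg_left hIJ h2β
          _ = (2 * M / β) * J := by ring
  · intro b' Θ hΘ hNΘ K hKcl x₀ x₁ x₂ hx₁ hx₂ hmin₁ hmin₂
    have hext : ∀ u w : V, (∀ v, ⟪u, v⟫ = ⟪w, v⟫) → u = w := fun u w h =>
      ext_inner_right ℝ h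
    have hΘadd : ∀ a c : X, Θ (a + c) = Θ a + Θ c := fun a c =>
      hext _ _ fun v => by
        rw [hΘ, inner_add_left, hΘ, hΘ, map_add, ContinuousLinearMap.add_apply]
    have hΘsub : ∀ a c : X, Θ (a - c) = Θ a - Θ c := fun a c =>
      hext _ _ fun v => by
        rw [hΘ, inner_sub_left, hΘ, hΘ, map_sub, ContinuousLinearMap.sub_apply]
    have hΘsmul : ∀ (r : ℝ) (a : X), Θ (r • a) = r • Θ a := fun r a =>
      hext _ _ fun v => by
        rw [hΘ, real_inner_smul_left, hΘ, map_smul, ContinuousLinearMap.smul_apply,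
          smul_eq_mul]
    set xm : X := (1 / 2 : ℝ) • (x₁ + x₂) with hxmdef
    have hxm : xm ∈ K := K.smul_mem _ (K.add_mem hx₁ hx₂)
    set v₁ : V := Θ (x₀ - x₁) with hv₁def
    set v₂ : V := Θ (x₀ - x₂) with hv₂def
    set m : ℝ := Nopt (x₀ - x₁) with hmdef
    have hm12 : Nopt (x₀ - x₂) = m := le_antisymm (hmin₂ x₁ hx₁) (hmin₁ x₂ hx₂)
    have hv₁ : ‖v₁‖ = m := (hNΘ _).symm
    have hv₂ : ‖v₂‖ = m := by rw [← hm12]; exact (hNΘ _).symm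
    have hm0 : 0 ≤ m := hv₁ ▸ norm_nonneg v₁
    have hmidX : x₀ - xm = (1 / 2 : ℝ) • ((x₀ - x₁) + (x₀ - x₂)) := by
      rw [hxmdef]; module
    have hΘmid : Θ (x₀ - xm) = (1 / 2 : ℝ) • (v₁ + v₂) := by
      rw [hmidX, hΘsmul, hΘadd]
    have hle' : m ≤ ‖(1 / 2 : ℝ) • (v₁ + v₂)‖ := by
      rw [← hΘmid, ← hNΘ]
      exact hmin₁ xm hxm
    have h2m : 2 * m ≤ ‖v₁ + v₂‖ := by
      rw [norm_smul] at hle'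
      simp only [Real.norm_eq_abs] at hle'
      have : |(1 / 2 : ℝ)| = 1 / 2 := by norm_num
      rw [this] at hle'
      linarith
    have hpar := parallelogram_law_with_norm ℝ v₁ v₂
    have hv12 : ‖v₁ - v₂‖ = 0 := by
      nlinarith [norm_nonneg (v₁ - v₂), norm_nonneg (v₁ + v₂)]
    have hveq : v₁ - v₂ = (0 : V) := norm_eq_zero.mp hv12
    have hΘ0 : Θ (x₂ - x₁) = 0 := by
      have h := hΘsub (x₀ - x₁) (x₀ - x₂)
      have he : (x₀ - x₁) - (x₀ - x₂) = x₂ - x₁ := by abel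
      rw [he] at h
      rw [h]
      exact hveq
    have hNz : Nopt (x₂ - x₁) = 0 := by rw [hNΘ, hΘ0, norm_zero]
    have hfin := hinfsup (x₂ - x₁)
    rw [hNz] at hfin
    have : ‖x₂ - x₁‖ = 0 := le_antisymm (by nlinarith) (norm_nonneg _)
    have := sub_eq_zero.mp (norm_eq_zero.mp this)
    exact this.symm
end
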